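/- Let 0 < δ ≤ 1 and let σ : [0,∞) → ℝ be a δ-solution. Then σ(u) = 1 − (1+δ)·log u for all 1 ≤ u ≤ 2. Moreover, if 1/log 2 − 1 ≤ δ ≤ 1, then σ(e^{1/(1+δ)}) = 0 and σ(u) > 0 for all 0 ≤ u < e^{1/(1+δ)}; that is, e^{1/(1+δ)} is the smallest positive zero of σ. -/

import Mathlib

open Finset

/-- `χ_δ(t) = 1` for `0 ≤ t ≤ 1` and `χ_δ(t) = −δ` for `t > 1`. -/
noncomputable def chiDelta (δ : ℝ) (t : ℝ) : ℝ := if t ≤ 1 then 1 else -δ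

/-- `σ` is a `δ`-solution: continuous on `[0,∞)`, equal to `1` on `[0,1]`, and satisfying
`u·σ(u) = ∫_0^u σ(u−t)·χ_δ(t) dt` for `u > 1`. -/
def IsDeltaSolution (δ : ℝ) (σ : ℝ → ℝ) : Prop :=
  ContinuousOn σ (Set.Ici 0) ∧ (∀ u : ℝ, 0 ≤ u → u ≤ 1 → σ u = 1) ∧
    ∀ u : ℝ, 1 < u → u * σ u = ∫ t in (0:ℝ)..u, σ (u - t) * chiDelta δ t

theorem prop2_initial_segment (δ : ℝ) (hδ0 : 0 < δ) (hδ1 : δ ≤ 1)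
    (σ : ℝ → ℝ) (hσ : IsDeltaSolution δ σ) :
    (∀ u : ℝ, 1 ≤ u → u ≤ 2 → σ u = 1 - (1 + δ) * Real.log u) ∧
    (1 / Real.log 2 - 1 ≤ δ →
      σ (Real.exp (1 / (1 + δ))) = 0 ∧
      ∀ u : ℝ, 0 ≤ u → u < Real.exp (1 / (1 + δ)) → 0 < σ u) := by
  obtain ⟨hcont, hone, heq⟩ := hσ
  have hδ' : (0:ℝ) < 1 + δ := by linarith
  have hcontAt : ∀ u : ℝ, 0 < u → ContinuousAt σ u := fun u hu =>
    hcont.continuousAt (Ici_mem_nhds hu)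
  have hσint : ∀ a b : ℝ, 0 ≤ a → 0 ≤ b → IntervalIntegrable σ MeasureTheory.volume a b := by
    intro a b ha hb
    apply ContinuousOn.intervalIntegrable
    apply hcont.mono
    intro x hx
    exact le_trans (le_inf ha hb) hx.1
  have hχmeas : Measurable (chiDelta δ) :=
    Measurable.ite measurableSet_Iic measurable_const measurable_const
  have hχint : ∀ a b : ℝ, IntervalIntegrable (chiDelta δ) MeasureTheory.volume a b := by
    intro a b
    rw [intervalIntegrable_iff]
    apply MeasureTheory.Integrable.mono'
      (g := fun _ => (1:ℝ))
      ((MeasureTheory.integrableOn_const_iff).mpr (Or.inr measure_Ioc_lt_top))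
      hχmeas.aestronglyMeasurable.restrict
    filter_upwards with t
    by_cases h : t ≤ 1
    · simp [chiDelta, h]
    · simp only [chiDelta, h, if_false, Real.norm_eq_abs, abs_neg]
      rw [abs_of_nonneg hδ0.le]; exact hδ1
  -- key integral relation on (1,2]
  have key : ∀ u : ℝ, 1 < u → u ≤ 2 →
      u * σ u = (∫ s in (1:ℝ)..u, σ s) + (2 - u) - δ * (u - 1) := by
    intro u hu1 hu2
    have hu0 : (0:ℝ) < u := by linarith
    have hst : ContinuousOn (fun t => σ (u - t)) (Set.Icc 0 u) := by
      apply hcont.comp (continuous_const.sub continuous_id).continuousOn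
      intro t ht
      simp only [Set.mem_Ici, id_eq, Pi.sub_apply]
      linarith [ht.2]
    have hii1 : IntervalIntegrable (fun t => σ (u - t) * chiDelta δ t)
        MeasureTheory.volume 0 1 := by
      apply (hχint 0 1).continuousOn_mul
      apply hst.mono
      rw [Set.uIcc_of_le (by norm_num : (0:ℝ) ≤ 1)]
      exact Set.Icc_subset_Icc le_rfl (by linarith)
    have hii2 : IntervalIntegrable (fun t => σ (u - t) * chiDelta δ t)
        MeasureTheory.volume 1 u := by
      apply (hχint 1 u).continuousOn_mul
      apply hst.mono
      rw [Set.uIcc_of_le hu1.le]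
      exact Set.Icc_subset_Icc (by norm_num) le_rfl
    have hsplit := intervalIntegral.integral_add_adjacent_intervals hii1 hii2
    rw [heq u hu1, ← hsplit]
    have e1 : (∫ t in (0:ℝ)..1, σ (u - t) * chiDelta δ t) = ∫ t in (0:ℝ)..1, σ (u - t) := by
      apply intervalIntegral.integral_congr
      intro t ht
      rw [Set.uIcc_of_le (by norm_num : (0:ℝ) ≤ 1)] at ht
      simp [chiDelta, ht.2]
    have e2 : (∫ t in (1:ℝ)..u, σ (u - t) * chiDelta δ t)
        = -δ * ∫ t in (1:ℝ)..u, σ (u - t) := by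
      rw [← intervalIntegral.integral_const_mul]
      apply intervalIntegral.integral_congr_ae
      filter_upwards with t ht
      rw [Set.uIoc_of_le hu1.le] at ht
      have h1 : ¬ t ≤ 1 := not_le.mpr ht.1
      simp only [chiDelta, h1, if_false]
      ring
    rw [e1, e2]
    have s1 : (∫ t in (0:ℝ)..1, σ (u - t)) = ∫ s in (u-1)..u, σ s := by
      rw [intervalIntegral.integral_comp_sub_left σ u]
      norm_num
    have s2 : (∫ t in (1:ℝ)..u, σ (u - t)) = ∫ s in (0:ℝ)..(u-1), σ s := by
      rw [intervalIntegral.integral_comp_sub_left σ u]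
      norm_num
    have s3 : (∫ s in (u-1)..u, σ s) = (∫ s in (u-1)..1, σ s) + ∫ s in (1:ℝ)..u, σ s :=
      (intervalIntegral.integral_add_adjacent_intervals
        (hσint (u-1) 1 (by linarith) (by norm_num))
        (hσint 1 u (by norm_num) hu0.le)).symm
    have v1 : (∫ s in (u-1)..1, σ s) = 2 - u := by
      rw [intervalIntegral.integral_congr (g := fun _ => (1:ℝ))
        (by intro x hx
            rw [Set.uIcc_of_le (by linarith : u - 1 ≤ 1)] at hx
            exact hone x (by linarith [hx.1]) hx.2)]
      simp
      ring
    have v2 : (∫ s in (0:ℝ)..(u-1), σ s) = u - 1 := by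
      rw [intervalIntegral.integral_congr (g := fun _ => (1:ℝ))
        (by intro x hx
            rw [Set.uIcc_of_le (by linarith : (0:ℝ) ≤ u - 1)] at hx
            exact hone x hx.1 (by linarith [hx.2]))]
      simp
    rw [s1, s2, s3, v1, v2]
    ring
  -- the candidate solution and its antiderivative
  set φ : ℝ → ℝ := fun u => 1 - (1 + δ) * Real.log u with hφdef
  set Φ : ℝ → ℝ := fun u => (u - 1) - (1 + δ) * (u * Real.log u - u + 1) with hΦdef
  set F : ℝ → ℝ := fun u => ∫ s in (1:ℝ)..u, σ s with hFdef
  have hΦid : ∀ u : ℝ, u * φ u = Φ u + (2 - u) - δ * (u - 1) := by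
    intro u; simp only [hφdef, hΦdef]; ring
  have hFderiv : ∀ u : ℝ, 0 < u → HasDerivAt F (σ u) u := by
    intro u hu
    exact intervalIntegral.integral_hasDerivAt_right (hσint 1 u (by norm_num) hu.le)
      (ContinuousAt.stronglyMeasurableAtFilter isOpen_Ioi
        (fun x hx => hcontAt x hx) u hu)
      (hcontAt u hu)
  have hΦderiv : ∀ u : ℝ, u ≠ 0 → HasDerivAt Φ (φ u) u := by
    intro u hu
    have h1 : HasDerivAt (fun u : ℝ => (u - 1) - (1+δ) * (u * Real.log u - u + 1))
        (1 - (1+δ) * ((Real.log u + 1) - 1)) u :=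
      ((hasDerivAt_id u).sub_const 1).sub
        ((((Real.hasDerivAt_mul_log hu).sub (hasDerivAt_id u)).add_const 1).const_mul (1+δ))
    have : (1 - (1+δ) * ((Real.log u + 1) - 1)) = φ u := by simp only [hφdef]; ring
    rw [← this]
    exact h1
  have hσ1 : σ 1 = 1 := hone 1 (by norm_num) le_rfl
  -- uniqueness via constant quotient
  have hGzero : ∀ u ∈ Set.Icc (1:ℝ) 2, F u - Φ u = 0 := by
    have hcontD : ContinuousOn (fun u => (F u - Φ u) / u) (Set.Icc 1 2) := by
      intro u hu
      have hu0 : (0:ℝ) < u := by linarith [hu.1]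
      exact (((((hFderiv u hu0).continuousAt).sub
        ((hΦderiv u hu0.ne').continuousAt)).div continuousAt_id hu0.ne')).continuousWithinAt
    have hderivD : ∀ x ∈ Set.Ico (1:ℝ) 2,
        HasDerivWithinAt (fun u => (F u - Φ u) / u) 0 (Set.Ici x) x := by
      intro x hx
      have hx0 : (0:ℝ) < x := by linarith [hx.1]
      have hd : HasDerivAt (fun u => (F u - Φ u) / u)
          (((σ x - φ x) * x - (F x - Φ x) * 1) / x ^ 2) x :=
        ((hFderiv x hx0).sub (hΦderiv x hx0.ne')).div (hasDerivAt_id x) hx0.ne'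
      have hGx : x * (σ x - φ x) = F x - Φ x := by
        rcases eq_or_lt_of_le hx.1 with h | h
        · have hF1 : F 1 = 0 := intervalIntegral.integral_same
          have hΦ1 : Φ 1 = 0 := by simp [hΦdef]
          have hφ1 : φ 1 = 1 := by simp [hφdef]
          rw [← h, hF1, hΦ1, hσ1, hφ1]; ring
        · have k := key x h (by linarith [hx.2])
          have i := hΦid x
          have : x * (σ x - φ x) = x * σ x - x * φ x := by ring
          rw [this, k, i]; ring
      have hval : ((σ x - φ x) * x - (F x - Φ x) * 1) / x ^ 2 = 0 := by
        have : (σ x - φ x) * x - (F x - Φ x) * 1 = 0 := by rw [← hGx]; ring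
        rw [this, zero_div]
      rw [hval] at hd
      exact hd.hasDerivWithinAt
    intro u hu
    have := constant_of_has_deriv_right_zero hcontD hderivD u hu
    have h1 : F 1 - Φ 1 = 0 := by
      simp [hFdef, hΦdef, intervalIntegral.integral_same]
    rw [h1, zero_div] at this
    have hu0 : (0:ℝ) < u := by linarith [hu.1]
    field_simp at this
    simpa using this
  have part1 : ∀ u : ℝ, 1 ≤ u → u ≤ 2 → σ u = 1 - (1 + δ) * Real.log u := by
    intro u hu1 hu2
    rcases eq_or_lt_of_le hu1 with h | h
    · rw [← h, hσ1]; simp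
    · have hu0 : (0:ℝ) < u := by linarith
      have k := key u h hu2
      have i := hΦid u
      have g := hGzero u ⟨hu1, hu2⟩
      have : u * σ u = u * φ u := by
        rw [k, i]; linarith
      have := mul_left_cancel₀ hu0.ne' this
      rw [this]
  refine ⟨part1, fun hδ2 => ?_⟩
  have hlog2 : (0:ℝ) < Real.log 2 := Real.log_pos one_lt_two
  have hr1 : 1 < Real.exp (1 / (1 + δ)) := by
    have : Real.exp 0 < Real.exp (1 / (1 + δ)) := Real.exp_lt_exp.mpr (by positivity)
    simpa using this
  have hrle : Real.exp (1 / (1 + δ)) ≤ 2 := by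
    rw [show (2:ℝ) = Real.exp (Real.log 2) from (Real.exp_log (by norm_num)).symm]
    apply Real.exp_le_exp.mpr
    rw [div_le_iff₀ hδ']
    have h1 : 1 / Real.log 2 ≤ 1 + δ := by linarith
    calc (1:ℝ) = (1 / Real.log 2) * Real.log 2 := by field_simp
    _ ≤ (1 + δ) * Real.log 2 := mul_le_mul_of_nonneg_right h1 hlog2.le
    _ = Real.log 2 * (1 + δ) := by ring
  have hσr : σ (Real.exp (1 / (1 + δ))) = 0 := by
    rw [part1 _ hr1.le hrle, Real.log_exp]
    field_simp
    norm_num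
  refine ⟨hσr, fun u hu0 hur => ?_⟩
  by_cases h1 : u ≤ 1
  · rw [hone u hu0 h1]; norm_num
  · push_neg at h1
    rw [part1 u h1.le (le_trans hur.le hrle)]
    have hlt : Real.log u < 1 / (1 + δ) := by
      have := Real.log_lt_log (by linarith) hur
      rwa [Real.log_exp] at this
    have : (1 + δ) * Real.log u < (1 + δ) * (1 / (1 + δ)) :=
      mul_lt_mul_of_pos_left hlt hδ'
    rw [mul_one_div_cancel hδ'.ne'] at this
    linarith
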